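/- Let A, B ∈ Matrix (Fin n) (Fin n) ℂ and u : ℝ → ℂ continuous with |u| ≤ M on [0,T]. Then the solution of x'(t) = A x(t) + u(t) B x(t), x(0) = x₀, admits the absolutely convergent series (Volterra) expansion x(t) = exp(tA)x₀ + ∑_{k=1}^∞ ∫_{0≤τ_k≤⋯≤τ_1≤t} u(τ₁)⋯u(τ_k) exp((t−τ₁)A) B exp((τ₁−τ₂)A) B ⋯ B exp(τ_k A) x₀ dτ₁⋯dτ_k for all t ∈ [0,T]. -/

import Mathlib

open MeasureTheory intervalIntegral

/-- The `k`-th term of the Volterra series: `volterraTerm A B u x₀ 0 t = exp (t A) x₀` and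
`volterraTerm A B u x₀ (k+1) t
  = ∫₀ᵗ u τ • exp ((t-τ) A) B (volterraTerm A B u x₀ k τ) dτ`,
which unfolds to the iterated integral over the ordered simplex
`{0 ≤ τ_k ≤ ⋯ ≤ τ₁ ≤ t}` of `u τ₁ ⋯ u τ_k • e^{(t-τ₁)A} B e^{(τ₁-τ₂)A} B ⋯ B e^{τ_k A} x₀`. -/
noncomputable def volterraTerm {n : ℕ} (A B : Matrix (Fin n) (Fin n) ℂ) (u : ℝ → ℂ)
    (x₀ : Fin n → ℂ) : ℕ → ℝ → Fin n → ℂ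
  | 0, t => (NormedSpace.exp (t • A)).mulVec x₀
  | k + 1, t => ∫ τ in (0:ℝ)..t,
      u τ • (NormedSpace.exp ((t - τ) • A)).mulVec (B.mulVec (volterraTerm A B u x₀ k τ))

/-! ### Auxiliary definitions and lemmas -/

/-- The continuous linear map on `Fin n → ℂ` given by a matrix. -/
noncomputable def matCLM {n : ℕ} (M : Matrix (Fin n) (Fin n) ℂ) :
    (Fin n → ℂ) →L[ℂ] (Fin n → ℂ) :=
  LinearMap.toContinuousLinearMap M.mulVecLin

lemma matCLM_apply {n : ℕ} (M : Matrix (Fin n) (Fin n) ℂ) (v : Fin n → ℂ) :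
    matCLM M v = M.mulVec v := rfl

/-- `matCLM` as an algebra homomorphism. -/
noncomputable def matAlgHom (n : ℕ) :
    Matrix (Fin n) (Fin n) ℂ →ₐ[ℂ] ((Fin n → ℂ) →L[ℂ] (Fin n → ℂ)) where
  toFun := matCLM
  map_one' := ContinuousLinearMap.ext fun v => by
    simp [matCLM_apply, Matrix.one_mulVec]
  map_mul' M N := ContinuousLinearMap.ext fun v => by
    simp [matCLM_apply, ContinuousLinearMap.mul_apply, Matrix.mulVec_mulVec]
  map_zero' := ContinuousLinearMap.ext fun v => by
    simp [matCLM_apply, Matrix.zero_mulVec]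
  map_add' M N := ContinuousLinearMap.ext fun v => by
    simp [matCLM_apply, Matrix.add_mulVec]
  commutes' c := ContinuousLinearMap.ext fun v => by
    simp [matCLM_apply, Algebra.algebraMap_eq_smul_one, Matrix.smul_mulVec,
      Matrix.one_mulVec]

lemma exp_matCLM {n : ℕ} (M : Matrix (Fin n) (Fin n) ℂ) :
    matCLM (NormedSpace.exp M) = NormedSpace.exp (matCLM M) := by
  letI : SeminormedRing (Matrix (Fin n) (Fin n) ℂ) := Matrix.linftyOpSemiNormedRing
  letI : NormedRing (Matrix (Fin n) (Fin n) ℂ) := Matrix.linftyOpNormedRing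
  letI : NormedAlgebra ℂ (Matrix (Fin n) (Fin n) ℂ) := Matrix.linftyOpNormedAlgebra
  letI : NormedAlgebra ℚ (Matrix (Fin n) (Fin n) ℂ) := .restrictScalars ℚ ℂ _
  have hcont : Continuous (matAlgHom n) :=
    LinearMap.continuous_of_finiteDimensional (matAlgHom n).toLinearMap
  exact NormedSpace.map_exp (matAlgHom n) hcont M

lemma exp_smul_mulVec {n : ℕ} (A : Matrix (Fin n) (Fin n) ℂ) (t : ℝ) (v : Fin n → ℂ) :
    (NormedSpace.exp (t • A)).mulVec v = NormedSpace.exp (t • matCLM A) v := by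
  rw [← matCLM_apply, exp_matCLM]
  congr 2
  rw [← algebraMap_smul ℂ t A, ← algebraMap_smul ℂ t (matCLM A)]
  exact map_smul (matAlgHom n).toLinearMap _ _

/-- The Picard iteration sequence for the time-dependent linear ODE `y' = G t y`. -/
noncomputable def picardSeq {n : ℕ} (G : ℝ → ((Fin n → ℂ) →L[ℂ] (Fin n → ℂ)))
    (x₀ : Fin n → ℂ) : ℕ → ℝ → Fin n → ℂ
  | 0, _ => x₀
  | k + 1, t => ∫ τ in (0:ℝ)..t, G τ (picardSeq G x₀ k τ)

lemma picardSeq_continuous {n : ℕ} {G : ℝ → ((Fin n → ℂ) →L[ℂ] (Fin n → ℂ))}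
    (hG : Continuous G) (x₀ : Fin n → ℂ) : ∀ k, Continuous (picardSeq G x₀ k)
  | 0 => continuous_const
  | k + 1 => by
    have h := hG.clm_apply (picardSeq_continuous hG x₀ k)
    exact intervalIntegral.continuous_primitive (fun a b => h.intervalIntegrable a b) 0

/-- Basic integral bound: if `‖f τ‖ ≤ c * τ ^ m` on `(0, t]` then
`‖∫₀ᵗ f‖ ≤ c * t ^ (m+1) / (m+1)`. -/
lemma norm_integral_le_pow {E : Type*} [NormedAddCommGroup E] [NormedSpace ℝ E] {f : ℝ → E}
    {t c : ℝ} (ht : 0 ≤ t) (hc : 0 ≤ c) (m : ℕ)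
    (hb : ∀ τ ∈ Set.Ioc (0:ℝ) t, ‖f τ‖ ≤ c * τ ^ m) :
    ‖∫ τ in (0:ℝ)..t, f τ‖ ≤ c * t ^ (m + 1) / (m + 1) := by
  have h1 : ‖∫ τ in (0:ℝ)..t, f τ‖ ≤ |∫ τ in (0:ℝ)..t, c * τ ^ m| := by
    apply intervalIntegral.norm_integral_le_abs_of_norm_le
    · rw [Set.uIoc_of_le ht]
      exact (ae_restrict_iff' measurableSet_Ioc).2 (Filter.Eventually.of_forall hb)
    · exact (continuous_const.mul (continuous_pow m)).intervalIntegrable 0 t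
  rw [intervalIntegral.integral_const_mul, integral_pow] at h1
  have h2 : c * ((t ^ (m + 1) - 0 ^ (m + 1)) / (m + 1)) = c * t ^ (m + 1) / (m + 1) := by
    rw [zero_pow (Nat.succ_ne_zero m)]; ring
  rw [h2] at h1
  refine h1.trans_eq (abs_of_nonneg ?_)
  positivity

lemma picardSeq_norm_le {n : ℕ} {G : ℝ → ((Fin n → ℂ) →L[ℂ] (Fin n → ℂ))}
    (hG : Continuous G) (x₀ : Fin n → ℂ) {K T : ℝ}
    (hK : ∀ τ ∈ Set.Icc (0:ℝ) T, ‖G τ‖ ≤ K) (hK0 : 0 ≤ K) :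
    ∀ k, ∀ t ∈ Set.Icc (0:ℝ) T,
      ‖picardSeq G x₀ k t‖ ≤ ‖x₀‖ * (K * t) ^ k / (k.factorial : ℝ) := by
  intro k
  induction k with
  | zero => intro t _; simp [picardSeq]
  | succ k ih =>
    intro t ht
    have ht0 : 0 ≤ t := ht.1
    have hc : (0:ℝ) ≤ ‖x₀‖ * K ^ (k + 1) / (k.factorial : ℝ) := by positivity
    have hb : ∀ τ ∈ Set.Ioc (0:ℝ) t, ‖G τ (picardSeq G x₀ k τ)‖ ≤
        (‖x₀‖ * K ^ (k + 1) / (k.factorial : ℝ)) * τ ^ k := by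
      intro τ hτ
      have hτT : τ ∈ Set.Icc (0:ℝ) T := ⟨hτ.1.le, hτ.2.trans ht.2⟩
      calc ‖G τ (picardSeq G x₀ k τ)‖ ≤ ‖G τ‖ * ‖picardSeq G x₀ k τ‖ :=
            (G τ).le_opNorm _
        _ ≤ K * (‖x₀‖ * (K * τ) ^ k / (k.factorial : ℝ)) :=
            mul_le_mul (hK τ hτT) (ih τ hτT) (norm_nonneg _) hK0
        _ = (‖x₀‖ * K ^ (k + 1) / (k.factorial : ℝ)) * τ ^ k := by
            rw [mul_pow]; ring
    have h := norm_integral_le_pow ht0 hc k hb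
    have heq : ‖x₀‖ * K ^ (k + 1) / (k.factorial : ℝ) * t ^ (k + 1) / (k + 1)
        = ‖x₀‖ * (K * t) ^ (k + 1) / ((k + 1).factorial : ℝ) := by
      rw [mul_pow, Nat.factorial_succ]
      have h1 : ((k.factorial : ℝ)) ≠ 0 := Nat.cast_ne_zero.2 k.factorial_ne_zero
      have h2 : ((k:ℝ) + 1) ≠ 0 := by positivity
      push_cast
      field_simp
    calc ‖picardSeq G x₀ (k+1) t‖
        = ‖∫ τ in (0:ℝ)..t, G τ (picardSeq G x₀ k τ)‖ := rfl
      _ ≤ ‖x₀‖ * K ^ (k + 1) / (k.factorial : ℝ) * t ^ (k + 1) / (k + 1) := h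
      _ = ‖x₀‖ * (K * t) ^ (k + 1) / ((k + 1).factorial : ℝ) := heq

set_option maxHeartbeats 6000000 in
/-- **Volterra series expansion of the bilinear system.** If `|u| ≤ M` on `[0, T]` and
`x' = A x + u • B x`, `x 0 = x₀`, then for all `t ∈ [0, T]` the Volterra series converges
absolutely and sums to `x t`. -/
theorem stmt_2 {n : ℕ} (A B : Matrix (Fin n) (Fin n) ℂ) (u : ℝ → ℂ) (hu : Continuous u)
    (M T : ℝ) (hM : ∀ t ∈ Set.Icc (0:ℝ) T, ‖u t‖ ≤ M)
    (x₀ : Fin n → ℂ) (x : ℝ → Fin n → ℂ) (hx0 : x 0 = x₀)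
    (hx : ∀ t : ℝ, HasDerivAt x (A.mulVec (x t) + u t • B.mulVec (x t)) t) :
    ∀ t ∈ Set.Icc (0:ℝ) T,
      (Summable fun k : ℕ => ‖volterraTerm A B u x₀ k t‖) ∧
      x t = ∑' k : ℕ, volterraTerm A B u x₀ k t := by
  letI : NormedAlgebra ℚ ((Fin n → ℂ) →L[ℂ] (Fin n → ℂ)) := .restrictScalars ℚ ℂ _
  -- notation
  have hcomm : ∀ s r : ℝ, NormedSpace.exp ((s + r) • matCLM A)
      = NormedSpace.exp (s • matCLM A) * NormedSpace.exp (r • matCLM A) := by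
    intro s r
    rw [show (s + r) • matCLM A = s • matCLM A + r • matCLM A from add_smul s r (matCLM A)]
    refine NormedSpace.exp_add_of_commute ?_
    show _ = _
    ext v
    simp only [ContinuousLinearMap.mul_apply, ContinuousLinearMap.smul_apply,
      ContinuousLinearMap.map_smul_of_tower]
    rw [smul_comm]
  have hone : ∀ s : ℝ, NormedSpace.exp (s • matCLM A) * NormedSpace.exp ((-s) • matCLM A)
      = 1 := by
    intro s
    rw [← hcomm, add_neg_cancel, show (0:ℝ) • matCLM A = 0 from zero_smul ℝ (matCLM A), NormedSpace.exp_zero]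
  have hinv : ∀ (s : ℝ) (w : Fin n → ℂ),
      NormedSpace.exp (s • matCLM A) (NormedSpace.exp ((-s) • matCLM A) w) = w := by
    intro s w
    rw [← ContinuousLinearMap.mul_apply, hone, ContinuousLinearMap.one_apply]
  have hexp_cont : Continuous fun s : ℝ => NormedSpace.exp (s • matCLM A) :=
    NormedSpace.exp_continuous.comp (continuous_id.smul continuous_const)
  set G : ℝ → ((Fin n → ℂ) →L[ℂ] (Fin n → ℂ)) := fun τ =>
    u τ • (NormedSpace.exp ((-τ) • matCLM A) * matCLM B * NormedSpace.exp (τ • matCLM A))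
    with hGdef
  have hG_cont : Continuous G :=
    hu.smul (((hexp_cont.comp continuous_neg).mul continuous_const).mul hexp_cont)
  have hcontz : ∀ k, Continuous (picardSeq G x₀ k) := picardSeq_continuous hG_cont x₀
  have hGz_int : ∀ k (s : ℝ), IntervalIntegrable (fun τ => G τ (picardSeq G x₀ k τ))
      volume 0 s := fun k s => (hG_cont.clm_apply (hcontz k)).intervalIntegrable 0 s
  -- relation between volterraTerm and picardSeq
  have hrel : ∀ k (s : ℝ), volterraTerm A B u x₀ k s
      = NormedSpace.exp (s • matCLM A) (picardSeq G x₀ k s) := by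
    intro k
    induction k with
    | zero =>
      intro s
      exact exp_smul_mulVec A s x₀
    | succ k ih =>
      intro s
      have hint : ∀ τ : ℝ,
          u τ • (NormedSpace.exp ((s - τ) • A)).mulVec (B.mulVec (volterraTerm A B u x₀ k τ))
          = NormedSpace.exp (s • matCLM A) (G τ (picardSeq G x₀ k τ)) := by
        intro τ
        rw [ih τ, exp_smul_mulVec, show s - τ = s + (-τ) by ring, hcomm]
        simp only [hGdef, ContinuousLinearMap.mul_apply, ContinuousLinearMap.smul_apply,
          _root_.map_smul, matCLM_apply]
      calc volterraTerm A B u x₀ (k+1) s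
          = ∫ τ in (0:ℝ)..s, u τ • (NormedSpace.exp ((s - τ) • A)).mulVec
              (B.mulVec (volterraTerm A B u x₀ k τ)) := rfl
        _ = ∫ τ in (0:ℝ)..s, NormedSpace.exp (s • matCLM A) (G τ (picardSeq G x₀ k τ)) := by
            simp only [hint]
        _ = NormedSpace.exp (s • matCLM A) (∫ τ in (0:ℝ)..s, G τ (picardSeq G x₀ k τ)) :=
            ContinuousLinearMap.intervalIntegral_comp_comm _ (hGz_int k s)
        _ = NormedSpace.exp (s • matCLM A) (picardSeq G x₀ (k+1) s) := rfl
  -- the transformed solution y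
  set y : ℝ → Fin n → ℂ := fun s => NormedSpace.exp ((-s) • matCLM A) (x s) with hydef
  have hx_cont : Continuous x := by
    rw [continuous_iff_continuousAt]; exact fun s => (hx s).continuousAt
  have hy_cont : Continuous y :=
    ((hexp_cont.comp continuous_neg).clm_apply hx_cont)
  have hxy : ∀ s : ℝ, x s = NormedSpace.exp (s • matCLM A) (y s) := by
    intro s
    rw [hydef]
    exact (hinv s (x s)).symm
  -- derivative of y
  have hy_deriv : ∀ s : ℝ, HasDerivAt y (G s (y s)) s := by
    intro s
    have hc0 : HasDerivAt (fun r : ℝ => NormedSpace.exp (r • matCLM A))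
        (NormedSpace.exp ((-s) • matCLM A) * matCLM A) (-s) :=
      hasDerivAt_exp_smul_const (matCLM A) (-s)
    have hneg : HasDerivAt (fun r : ℝ => -r) (-1 : ℝ) s := by
      exact hasDerivAt_neg s
    have hc' : HasDerivAt (fun r : ℝ => NormedSpace.exp ((-r) • matCLM A))
        ((-1 : ℝ) • (NormedSpace.exp ((-s) • matCLM A) * matCLM A)) s :=
      HasDerivAt.scomp s hc0 hneg
    -- restrict scalars to apply clm_apply over ℝ
    let L : ((Fin n → ℂ) →L[ℂ] (Fin n → ℂ)) →L[ℝ] ((Fin n → ℂ) →L[ℝ] (Fin n → ℂ)) :=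
      ContinuousLinearMap.restrictScalarsL ℂ (Fin n → ℂ) (Fin n → ℂ) ℝ ℝ
    have hcR : HasDerivAt (fun r : ℝ => L (NormedSpace.exp ((-r) • matCLM A)))
        (L ((-1 : ℝ) • (NormedSpace.exp ((-s) • matCLM A) * matCLM A))) s :=
      L.hasFDerivAt.comp_hasDerivAt s hc'
    have hd := hcR.clm_apply (hx s)
    have heq : L ((-1 : ℝ) • (NormedSpace.exp ((-s) • matCLM A) * matCLM A)) (x s)
        + L (NormedSpace.exp ((-s) • matCLM A)) (A.mulVec (x s) + u s • B.mulVec (x s))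
        = G s (y s) := by
      have h1 : G s (y s) = u s • NormedSpace.exp ((-s) • matCLM A) (B.mulVec (x s)) := by
        simp only [hGdef, hydef, ContinuousLinearMap.smul_apply,
          ContinuousLinearMap.mul_apply, hinv s (x s), matCLM_apply]
      rw [h1]
      show ((-1 : ℝ) • (NormedSpace.exp ((-s) • matCLM A) * matCLM A)) (x s)
          + NormedSpace.exp ((-s) • matCLM A) (A.mulVec (x s) + u s • B.mulVec (x s)) = _
      rw [ContinuousLinearMap.smul_apply, ContinuousLinearMap.mul_apply, map_add,
        (NormedSpace.exp ((-s) • matCLM A)).map_smul]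
      simp only [matCLM_apply, neg_one_smul]
      abel
    rw [heq] at hd
    exact hd
  have hGy_cont : Continuous fun τ => G τ (y τ) := hG_cont.clm_apply hy_cont
  -- integral equation for y
  have hy0 : y 0 = x₀ := by
    show NormedSpace.exp ((-0:ℝ) • matCLM A) (x 0) = x₀
    rw [hx0, show ((-0:ℝ)) • matCLM A = 0 by rw [neg_zero]; exact zero_smul ℝ (matCLM A),
      NormedSpace.exp_zero, ContinuousLinearMap.one_apply]
  have hy_int : ∀ s : ℝ, y s = x₀ + ∫ τ in (0:ℝ)..s, G τ (y τ) := by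
    intro s
    have h := intervalIntegral.integral_eq_sub_of_hasDerivAt
      (f := y) (f' := fun τ => G τ (y τ)) (a := 0) (b := s)
      (fun τ _ => hy_deriv τ) (hGy_cont.intervalIntegrable 0 s)
    rw [h, hy0]
    abel
  -- now fix t
  intro t ht
  have ht0 : 0 ≤ t := ht.1
  have htT : t ≤ T := ht.2
  -- uniform bound on G over [0,T]
  obtain ⟨K₀, hK₀⟩ := (isCompact_Icc (a := (0:ℝ)) (b := T)).exists_bound_of_continuousOn
    hG_cont.continuousOn
  set K := max K₀ 0 with hKdef
  have hK : ∀ τ ∈ Set.Icc (0:ℝ) T, ‖G τ‖ ≤ K := fun τ hτ =>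
    (hK₀ τ hτ).trans (le_max_left _ _)
  have hK0 : 0 ≤ K := le_max_right _ _
  -- uniform bound on y over [0,T]
  obtain ⟨C₀, hC₀⟩ := (isCompact_Icc (a := (0:ℝ)) (b := T)).exists_bound_of_continuousOn
    hy_cont.continuousOn
  set C := max C₀ 0 with hCdef
  have hC : ∀ τ ∈ Set.Icc (0:ℝ) T, ‖y τ‖ ≤ C := fun τ hτ =>
    (hC₀ τ hτ).trans (le_max_left _ _)
  have hC0 : 0 ≤ C := le_max_right _ _
  -- term bounds
  have hzb := picardSeq_norm_le hG_cont x₀ hK hK0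
  -- summability
  have hsum_norm_z : Summable fun k => ‖picardSeq G x₀ k t‖ := by
    refine Summable.of_nonneg_of_le (fun k => norm_nonneg _)
      (fun k => hzb k t ht) ?_
    simpa [mul_div_assoc] using (Real.summable_pow_div_factorial (K * t)).mul_left ‖x₀‖
  have hsum_z : Summable fun k => picardSeq G x₀ k t := hsum_norm_z.of_norm
  have hsum_volterra : Summable fun k => ‖volterraTerm A B u x₀ k t‖ := by
    refine Summable.of_nonneg_of_le (fun k => norm_nonneg _) (fun k => ?_)
      (hsum_norm_z.mul_left ‖NormedSpace.exp (t • matCLM A)‖)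
    rw [hrel k t]
    exact (NormedSpace.exp (t • matCLM A)).le_opNorm _
  refine ⟨hsum_volterra, ?_⟩
  -- remainder recursion
  have hRrec : ∀ (N : ℕ) (s : ℝ),
      y s - ∑ k ∈ Finset.range (N + 2), picardSeq G x₀ k s
      = ∫ τ in (0:ℝ)..s, G τ (y τ - ∑ k ∈ Finset.range (N + 1), picardSeq G x₀ k τ) := by
    intro N s
    have h1 : ∑ k ∈ Finset.range (N + 2), picardSeq G x₀ k s
        = x₀ + ∫ τ in (0:ℝ)..s, ∑ k ∈ Finset.range (N + 1), G τ (picardSeq G x₀ k τ) := by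
      rw [Finset.sum_range_succ']
      rw [intervalIntegral.integral_finset_sum (fun k _ => hGz_int k s)]
      simp only [picardSeq]
      rw [add_comm]
    have hsum_cont : Continuous fun τ => ∑ k ∈ Finset.range (N + 1), G τ (picardSeq G x₀ k τ) :=
      continuous_finset_sum _ (fun k _ => hG_cont.clm_apply (hcontz k))
    rw [hy_int s, h1, add_sub_add_left_eq_sub,
      ← intervalIntegral.integral_sub (hGy_cont.intervalIntegrable 0 s)
        (hsum_cont.intervalIntegrable 0 s)]
    congr 1
    funext τ
    rw [map_sub, map_sum]
  -- remainder bound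
  have hR : ∀ (N : ℕ), ∀ s ∈ Set.Icc (0:ℝ) T,
      ‖y s - ∑ k ∈ Finset.range (N + 1), picardSeq G x₀ k s‖
      ≤ C * (K * s) ^ (N + 1) / ((N + 1).factorial : ℝ) := by
    intro N
    induction N with
    | zero =>
      intro s hs
      have h1 : y s - ∑ k ∈ Finset.range 1, picardSeq G x₀ k s
          = ∫ τ in (0:ℝ)..s, G τ (y τ) := by
        rw [hy_int s]
        simp [picardSeq]
      rw [h1]
      have hb : ∀ τ ∈ Set.Ioc (0:ℝ) s, ‖G τ (y τ)‖ ≤ (C * K) * τ ^ 0 := by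
        intro τ hτ
        have hτT : τ ∈ Set.Icc (0:ℝ) T := ⟨hτ.1.le, hτ.2.trans hs.2⟩
        calc ‖G τ (y τ)‖ ≤ ‖G τ‖ * ‖y τ‖ := (G τ).le_opNorm _
          _ ≤ K * C := mul_le_mul (hK τ hτT) (hC τ hτT) (norm_nonneg _) hK0
          _ = (C * K) * τ ^ 0 := by ring
      have h := norm_integral_le_pow hs.1 (by positivity) 0 hb
      refine h.trans_eq ?_
      norm_num [Nat.factorial]
      ring
    | succ N ih =>
      intro s hs
      rw [hRrec N s]
      have hc : (0:ℝ) ≤ C * K ^ (N + 2) / ((N + 1).factorial : ℝ) := by positivity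
      have hb : ∀ τ ∈ Set.Ioc (0:ℝ) s,
          ‖G τ (y τ - ∑ k ∈ Finset.range (N + 1), picardSeq G x₀ k τ)‖
          ≤ (C * K ^ (N + 2) / ((N + 1).factorial : ℝ)) * τ ^ (N + 1) := by
        intro τ hτ
        have hτT : τ ∈ Set.Icc (0:ℝ) T := ⟨hτ.1.le, hτ.2.trans hs.2⟩
        calc ‖G τ (y τ - ∑ k ∈ Finset.range (N + 1), picardSeq G x₀ k τ)‖
            ≤ ‖G τ‖ * ‖y τ - ∑ k ∈ Finset.range (N + 1), picardSeq G x₀ k τ‖ :=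
              (G τ).le_opNorm _
          _ ≤ K * (C * (K * τ) ^ (N + 1) / ((N + 1).factorial : ℝ)) :=
              mul_le_mul (hK τ hτT) (ih τ hτT) (norm_nonneg _) hK0
          _ = (C * K ^ (N + 2) / ((N + 1).factorial : ℝ)) * τ ^ (N + 1) := by
              rw [mul_pow]; ring
      have h := norm_integral_le_pow hs.1 hc (N + 1) hb
      refine h.trans_eq ?_
      rw [mul_pow, Nat.factorial_succ (N + 1)]
      have h1 : (((N + 1).factorial : ℝ)) ≠ 0 := Nat.cast_ne_zero.2 (N + 1).factorial_ne_zero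
      have h2 : ((N:ℝ) + 1 + 1) ≠ 0 := by positivity
      push_cast
      field_simp
  -- limit of partial sums
  have htend0 : Filter.Tendsto (fun N : ℕ => C * (K * t) ^ (N + 1) / ((N + 1).factorial : ℝ))
      Filter.atTop (nhds 0) := by
    have h1 : Filter.Tendsto (fun N : ℕ => (K * t) ^ N / (N.factorial : ℝ))
        Filter.atTop (nhds 0) := (Real.summable_pow_div_factorial (K * t)).tendsto_atTop_zero
    have h2 := (h1.comp (Filter.tendsto_add_atTop_nat 1)).const_mul C
    simpa [mul_div_assoc] using h2
  have hlim : Filter.Tendsto (fun N : ℕ => ∑ k ∈ Finset.range (N + 1), picardSeq G x₀ k t)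
      Filter.atTop (nhds (y t)) := by
    rw [← tendsto_sub_nhds_zero_iff]
    apply squeeze_zero_norm (fun N => ?_) htend0
    rw [norm_sub_rev]
    exact hR N t ht
  have hytsum : y t = ∑' k, picardSeq G x₀ k t := by
    have h2 : Filter.Tendsto (fun N : ℕ => ∑ k ∈ Finset.range N, picardSeq G x₀ k t)
        Filter.atTop (nhds (∑' k, picardSeq G x₀ k t)) := hsum_z.hasSum.tendsto_sum_nat
    have h3 := h2.comp (Filter.tendsto_add_atTop_nat 1)
    exact tendsto_nhds_unique hlim h3
  -- conclude
  rw [hxy t, hytsum, ContinuousLinearMap.map_tsum _ hsum_z]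
  exact tsum_congr fun k => (hrel k t).symm
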